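/- For positive reals a0,a1,b0,b1,c0,c1 with a1+b1+c1 = a0+b0+c0 = 1, b1 ≥ b0, and c1/c0 > b1/b0 > a1/a0, the inequality a1·log(a1/a0) + (b1+c1)·log((b1+c1)/(b0+c0)) > (a1+c1)·log((a1+c1)/(a0+c0)) + b1·log(b1/b0) holds. -/

import Mathlib

open Real

/-- One-term bound used for the log-sum inequality. -/
lemma term_bound (p q S T : ℝ) (hp : 0 < p) (hq : 0 < q) (hS : 0 < S) (hT : 0 < T) :
    p * Real.log (S / T) ≤ p * Real.log (p / q) + q * S / T - p := by
  have h : Real.log (q * S / (p * T)) ≤ q * S / (p * T) - 1 :=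
    Real.log_le_sub_one_of_pos (by positivity)
  have e : Real.log (q * S / (p * T)) = Real.log (S / T) - Real.log (p / q) := by
    rw [show q * S / (p * T) = (S / T) / (p / q) by field_simp,
      Real.log_div (by positivity) (by positivity)]
  have h2 : Real.log (S / T) - Real.log (p / q) ≤ q * S / (p * T) - 1 := by rw [← e]; exact h
  have h3 : p * (Real.log (S / T) - Real.log (p / q)) ≤ p * (q * S / (p * T) - 1) :=
    mul_le_mul_of_nonneg_left h2 hp.le
  have e2 : p * (q * S / (p * T) - 1) = q * S / T - p := by field_simp
  rw [mul_sub, e2] at h3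
  linarith

lemma term_bound_lt (p q S T : ℝ) (hp : 0 < p) (hq : 0 < q) (hS : 0 < S) (hT : 0 < T)
    (hne : q * S ≠ p * T) :
    p * Real.log (S / T) < p * Real.log (p / q) + q * S / T - p := by
  have hone : q * S / (p * T) ≠ 1 := by
    intro h
    rw [div_eq_one_iff_eq (mul_pos hp hT).ne'] at h
    exact hne h
  have h : Real.log (q * S / (p * T)) < q * S / (p * T) - 1 :=
    Real.log_lt_sub_one_of_pos (by positivity) hone
  have e : Real.log (q * S / (p * T)) = Real.log (S / T) - Real.log (p / q) := by
    rw [show q * S / (p * T) = (S / T) / (p / q) by field_simp,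
      Real.log_div (by positivity) (by positivity)]
  have h2 : Real.log (S / T) - Real.log (p / q) < q * S / (p * T) - 1 := by rw [← e]; exact h
  have h3 : p * (Real.log (S / T) - Real.log (p / q)) < p * (q * S / (p * T) - 1) :=
    (mul_lt_mul_iff_right₀ hp).2 h2
  have e2 : p * (q * S / (p * T) - 1) = q * S / T - p := by field_simp
  rw [mul_sub, e2] at h3
  linarith

/-- Two-point log-sum inequality. -/
lemma logsum_le (p1 q1 p2 q2 : ℝ) (hp1 : 0 < p1) (hq1 : 0 < q1) (hp2 : 0 < p2) (hq2 : 0 < q2) :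
    (p1 + p2) * Real.log ((p1 + p2) / (q1 + q2)) ≤
      p1 * Real.log (p1 / q1) + p2 * Real.log (p2 / q2) := by
  have hS : 0 < p1 + p2 := by linarith
  have hT : 0 < q1 + q2 := by linarith
  have h1 := term_bound p1 q1 (p1 + p2) (q1 + q2) hp1 hq1 hS hT
  have h2 := term_bound p2 q2 (p1 + p2) (q1 + q2) hp2 hq2 hS hT
  have e : q1 * (p1 + p2) / (q1 + q2) + q2 * (p1 + p2) / (q1 + q2) = p1 + p2 := by
    field_simp
  have e3 : (p1 + p2) * Real.log ((p1 + p2) / (q1 + q2)) =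
      p1 * Real.log ((p1 + p2) / (q1 + q2)) + p2 * Real.log ((p1 + p2) / (q1 + q2)) := by ring
  linarith

/-- Strict two-point log-sum inequality. -/
lemma logsum_lt (p1 q1 p2 q2 : ℝ) (hp1 : 0 < p1) (hq1 : 0 < q1) (hp2 : 0 < p2) (hq2 : 0 < q2)
    (hne : p1 * q2 ≠ p2 * q1) :
    (p1 + p2) * Real.log ((p1 + p2) / (q1 + q2)) <
      p1 * Real.log (p1 / q1) + p2 * Real.log (p2 / q2) := by
  have hS : 0 < p1 + p2 := by linarith
  have hT : 0 < q1 + q2 := by linarith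
  have hne1 : q1 * (p1 + p2) ≠ p1 * (q1 + q2) := by
    intro h; apply hne; linear_combination -h
  have h1 := term_bound_lt p1 q1 (p1 + p2) (q1 + q2) hp1 hq1 hS hT hne1
  have h2 := term_bound p2 q2 (p1 + p2) (q1 + q2) hp2 hq2 hS hT
  have e : q1 * (p1 + p2) / (q1 + q2) + q2 * (p1 + p2) / (q1 + q2) = p1 + p2 := by
    field_simp
  have e3 : (p1 + p2) * Real.log ((p1 + p2) / (q1 + q2)) =
      p1 * Real.log ((p1 + p2) / (q1 + q2)) + p2 * Real.log ((p1 + p2) / (q1 + q2)) := by ring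
  linarith

/-- Strict Gibbs inequality for binary distributions. -/
lemma gibbs_pos (x y : ℝ) (hx0 : 0 < x) (hx1 : x < 1) (hy0 : 0 < y) (hy1 : y < 1)
    (hne : x ≠ y) :
    0 < x * Real.log (x / y) + (1 - x) * Real.log ((1 - x) / (1 - y)) := by
  have hne' : x * (1 - y) ≠ (1 - x) * y := by
    intro h; apply hne; linear_combination h
  have h := logsum_lt x y (1 - x) (1 - y) hx0 hy0 (by linarith) (by linarith) hne'
  rw [show x + (1 - x) = (1 : ℝ) by ring, show y + (1 - y) = (1 : ℝ) by ring] at h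
  simpa using h

/-- Binary KL strictly increases when both arguments are scaled by `t > 1`. -/
lemma lemmaA (x y t : ℝ) (hx0 : 0 < x) (hx1 : x < 1) (hy0 : 0 < y) (hy1 : y < 1)
    (ht : 1 < t) (htx : t * x < 1) (hty : t * y < 1) (hne : x ≠ y) :
    x * Real.log (x / y) + (1 - x) * Real.log ((1 - x) / (1 - y)) <
      (t * x) * Real.log ((t * x) / (t * y)) +
        (1 - t * x) * Real.log ((1 - t * x) / (1 - t * y)) := by
  have ht0 : 0 < t := by linarith
  have hl : 0 < 1 / t := by positivity
  have hl1 : 1 / t < 1 := by rw [div_lt_one ht0]; linarith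
  have htx0 : 0 < t * x := by positivity
  have hty0 : 0 < t * y := by positivity
  -- first term equality
  have e1 : x * Real.log (x / y) = (1 / t) * ((t * x) * Real.log ((t * x) / (t * y))) := by
    rw [mul_div_mul_left _ _ ht0.ne']
    field_simp
  -- second term bound via log-sum
  have hp1 : 0 < (1 / t) * (1 - t * x) := mul_pos hl (by linarith)
  have hq1 : 0 < (1 / t) * (1 - t * y) := mul_pos hl (by linarith)
  have hp2 : 0 < 1 - 1 / t := by linarith
  have hls := logsum_le ((1 / t) * (1 - t * x)) ((1 / t) * (1 - t * y)) (1 - 1 / t) (1 - 1 / t)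
    hp1 hq1 hp2 hp2
  have es1 : (1 / t) * (1 - t * x) + (1 - 1 / t) = 1 - x := by field_simp; ring
  have es2 : (1 / t) * (1 - t * y) + (1 - 1 / t) = 1 - y := by field_simp; ring
  have es3 : ((1 / t) * (1 - t * x)) / ((1 / t) * (1 - t * y)) = (1 - t * x) / (1 - t * y) :=
    mul_div_mul_left _ _ (by positivity)
  have es4 : (1 - 1 / t) / (1 - 1 / t) = 1 := div_self hp2.ne'
  rw [es1, es2, es3, es4, Real.log_one, mul_zero, add_zero] at hls
  -- hls : (1-x) * log((1-x)/(1-y)) ≤ (1/t)*(1-t*x) * log((1-t*x)/(1-t*y))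
  have hG : 0 < (t * x) * Real.log ((t * x) / (t * y)) +
      (1 - t * x) * Real.log ((1 - t * x) / (1 - t * y)) := by
    apply gibbs_pos _ _ htx0 htx hty0 hty
    intro h
    exact hne (mul_left_cancel₀ ht0.ne' h)
  have hfinal : (1 / t) * ((t * x) * Real.log ((t * x) / (t * y)) +
      (1 - t * x) * Real.log ((1 - t * x) / (1 - t * y))) <
      (t * x) * Real.log ((t * x) / (t * y)) +
        (1 - t * x) * Real.log ((1 - t * x) / (1 - t * y)) := by
    nlinarith [mul_pos (sub_pos.2 hl1) hG]
  nlinarith [hls, hfinal]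

/-- Binary KL with fixed second argument is strictly monotone above the diagonal. -/
lemma lemmaB (Y x x' : ℝ) (hY : 0 < Y) (h1 : Y < x) (h2 : x < x') (h3 : x' < 1) :
    x * Real.log (x / Y) + (1 - x) * Real.log ((1 - x) / (1 - Y)) <
      x' * Real.log (x' / Y) + (1 - x') * Real.log ((1 - x') / (1 - Y)) := by
  set μ := (x - Y) / (x' - Y) with hμdef
  have hd : 0 < x' - Y := by linarith
  have hμ0 : 0 < μ := div_pos (by linarith) hd
  have hμ1 : μ < 1 := by rw [hμdef, div_lt_one hd]; linarith
  have eμ : μ * (x' - Y) = x - Y := div_mul_cancel₀ _ hd.ne'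
  have hx0 : 0 < x := by linarith
  have hY1 : Y < 1 := by linarith
  -- first log-sum
  have hμ1' : 0 < 1 - μ := by linarith
  have hls1 := logsum_le (μ * x') (μ * Y) ((1 - μ) * Y) ((1 - μ) * Y)
    (mul_pos hμ0 (by linarith)) (mul_pos hμ0 hY) (mul_pos hμ1' hY) (mul_pos hμ1' hY)
  have f1 : μ * x' + (1 - μ) * Y = x := by linear_combination eμ
  have f2 : μ * Y + (1 - μ) * Y = Y := by ring
  have f3 : (μ * x') / (μ * Y) = x' / Y := mul_div_mul_left _ _ hμ0.ne'
  have f4 : ((1 - μ) * Y) / ((1 - μ) * Y) = 1 := div_self (mul_pos hμ1' hY).ne'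
  rw [f1, f2, f3, f4, Real.log_one, mul_zero, add_zero] at hls1
  -- second log-sum
  have hY1' : 0 < 1 - Y := by linarith
  have hls2 := logsum_le (μ * (1 - x')) (μ * (1 - Y)) ((1 - μ) * (1 - Y)) ((1 - μ) * (1 - Y))
    (mul_pos hμ0 (by linarith)) (mul_pos hμ0 hY1') (mul_pos hμ1' hY1') (mul_pos hμ1' hY1')
  have g1 : μ * (1 - x') + (1 - μ) * (1 - Y) = 1 - x := by linear_combination -eμ
  have g2 : μ * (1 - Y) + (1 - μ) * (1 - Y) = 1 - Y := by ring
  have g3 : (μ * (1 - x')) / (μ * (1 - Y)) = (1 - x') / (1 - Y) :=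
    mul_div_mul_left _ _ hμ0.ne'
  have g4 : ((1 - μ) * (1 - Y)) / ((1 - μ) * (1 - Y)) = 1 := div_self (mul_pos hμ1' hY1').ne'
  rw [g1, g2, g3, g4, Real.log_one, mul_zero, add_zero] at hls2
  have hG : 0 < x' * Real.log (x' / Y) + (1 - x') * Real.log ((1 - x') / (1 - Y)) :=
    gibbs_pos x' Y (by linarith) h3 hY hY1 (ne_of_gt (by linarith : Y < x'))
  have hfinal : μ * (x' * Real.log (x' / Y) + (1 - x') * Real.log ((1 - x') / (1 - Y))) <
      x' * Real.log (x' / Y) + (1 - x') * Real.log ((1 - x') / (1 - Y)) := by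
    nlinarith [mul_pos (sub_pos.2 hμ1) hG]
  nlinarith [hls1, hls2, hfinal]


/-- Normalized key step: merging `a` with `c` strictly decreases the
unnormalized KL divergence `D̃1` compared to keeping `a` separate. -/
theorem stmt_1 (a0 a1 b0 b1 c0 c1 : ℝ)
    (ha0 : 0 < a0) (ha1 : 0 < a1) (hb0 : 0 < b0) (hb1 : 0 < b1)
    (hc0 : 0 < c0) (hc1 : 0 < c1)
    (hsum1 : a1 + b1 + c1 = 1) (hsum0 : a0 + b0 + c0 = 1)
    (hb : b1 ≥ b0)
    (hcb : c1 / c0 > b1 / b0) (hba : b1 / b0 > a1 / a0) :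
    a1 * Real.log (a1 / a0) + (b1 + c1) * Real.log ((b1 + c1) / (b0 + c0)) >
      (a1 + c1) * Real.log ((a1 + c1) / (a0 + c0)) + b1 * Real.log (b1 / b0) := by
  have e1 : b1 + c1 = 1 - a1 := by linarith
  have e2 : b0 + c0 = 1 - a0 := by linarith
  have e3 : a1 + c1 = 1 - b1 := by linarith
  have e4 : a0 + c0 = 1 - b0 := by linarith
  rw [e1, e2, e3, e4]
  have ha1' : a1 < 1 := by linarith
  have ha0' : a0 < 1 := by linarith
  have hb1' : b1 < 1 := by linarith
  have hb0' : b0 < 1 := by linarith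
  have hba' : a1 * b0 < b1 * a0 := by
    rw [gt_iff_lt, div_lt_div_iff₀ ha0 hb0] at hba
    exact hba
  have hcb' : b1 * c0 < c1 * b0 := by
    rw [gt_iff_lt, div_lt_div_iff₀ hb0 hc0] at hcb
    exact hcb
  rcases eq_or_lt_of_le hb with heq | hlt
  · -- b1 = b0
    have ha : a1 < a0 := by nlinarith
    have hrhs1 : (1 - b1) / (1 - b0) = 1 := by rw [← heq]; exact div_self (by linarith)
    have hrhs2 : b1 / b0 = 1 := by rw [← heq]; exact div_self hb0.ne'
    rw [hrhs1, hrhs2, Real.log_one, mul_zero, mul_zero, add_zero]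
    exact gibbs_pos a1 a0 ha1 ha1' ha0 ha0' (ne_of_lt ha)
  · -- b0 < b1
    set t := (1 - a0) / b0 with htdef
    have hY : 0 < 1 - a0 := by linarith
    have ht : 1 < t := by rw [htdef, lt_div_iff₀ hb0]; linarith
    have htb0 : t * b0 = 1 - a0 := by rw [htdef]; field_simp
    have htx : t * b1 < 1 - a1 := by
      rw [htdef, div_mul_eq_mul_div, div_lt_iff₀ hb0]
      nlinarith
    have stepA := lemmaA b1 b0 t hb1 hb1' hb0 hb0' ht (by linarith) (by rw [htb0]; linarith)
      (ne_of_gt hlt)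
    rw [htb0] at stepA
    have hYx : 1 - a0 < t * b1 := by
      rw [← htb0]
      exact (mul_lt_mul_iff_right₀ (by linarith : (0:ℝ) < t)).2 hlt
    have stepB := lemmaB (1 - a0) (t * b1) (1 - a1) hY hYx htx (by linarith)
    have ea : (1 : ℝ) - (1 - a1) = a1 := by ring
    have eb : (1 : ℝ) - (1 - a0) = a0 := by ring
    rw [eb] at stepA stepB
    rw [ea] at stepB
    linarith
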